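/- arXiv:1402.4751 — 5 statements merged into one kernel-verified Lean document; each statement's English description precedes it below -/
import Mathlib

section
/- Let 1<p<2 and τ>0. There exists a unique c ∈ (-1,1) such that the cubic v(t) = -(1+τ²)²(p-1)t³ + (1+τ²)(3τ²+τ²p+3-3p)t² + (2τ²p-9τ⁴+τ⁴p+3-3p-6τ²)t - p + 5τ⁴ + 2τ²p - τ⁴p - 10τ² + 1 satisfies v(c)=0, v>0 on [-1,c) and v<0 on (c,1]. -/
set_option maxHeartbeats 1000000

theorem stmt_5 (p τ : ℝ) (hp1 : 1 < p) (hp2 : p < 2) (hτ : 0 < τ)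
    (v : ℝ → ℝ)
    (hv : v = fun t => -(1+τ^2)^2*(p-1)*t^3 + (1+τ^2)*(3*τ^2+τ^2*p+3-3*p)*t^2
      + (2*τ^2*p-9*τ^4+τ^4*p+3-3*p-6*τ^2)*t - p + 5*τ^4 + 2*τ^2*p - τ^4*p - 10*τ^2 + 1) :
    ∃! c : ℝ, c ∈ Set.Ioo (-1 : ℝ) 1 ∧ v c = 0 ∧
      (∀ t ∈ Set.Ico (-1 : ℝ) c, 0 < v t) ∧ (∀ t ∈ Set.Ioc c 1, v t < 0) := by
  obtain ⟨A, hA⟩ : ∃ a : ℝ, a = -(1+τ^2)^2*(p-1) := ⟨_, rfl⟩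
  obtain ⟨B, hB⟩ : ∃ a : ℝ, a = (1+τ^2)*(3*τ^2+τ^2*p+3-3*p) := ⟨_, rfl⟩
  obtain ⟨C, hC⟩ : ∃ a : ℝ, a = 2*τ^2*p-9*τ^4+τ^4*p+3-3*p-6*τ^2 := ⟨_, rfl⟩
  obtain ⟨D, hD⟩ : ∃ a : ℝ, a = -p + 5*τ^4 + 2*τ^2*p - τ^4*p - 10*τ^2 + 1 := ⟨_, rfl⟩
  have hvt : ∀ t, v t = A*t^3 + B*t^2 + C*t + D := by
    intro t; rw [hv, hA, hB, hC, hD]; ring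
  have hve : v = fun t => A*t^3 + B*t^2 + C*t + D := funext hvt
  clear hv
  have hT : (0:ℝ) < τ^2 := by positivity
  have hAneg : A < 0 := by
    rw [hA]
    nlinarith [mul_pos (pow_pos (by positivity : (0:ℝ) < 1+τ^2) 2)
      (by linarith : (0:ℝ) < p-1)]
  have hvm1 : 0 < v (-1) := by
    have h : v (-1) = 16*τ^4 := by rw [hvt, hA, hB, hC, hD]; ring
    rw [h]; positivity
  have hv1 : v 1 < 0 := by
    have h : v 1 = 8 - 8*p - 8*τ^2 := by rw [hvt, hA, hB, hC, hD]; ring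
    rw [h]; nlinarith
  have hder : ∀ t : ℝ, HasDerivAt v (3*A*t^2 + 2*B*t + C) t := by
    intro t
    have h1 : HasDerivAt (fun y : ℝ => A*y^3 + B*y^2 + C*y + D)
        (A*(↑(3:ℕ)*t^(3-1)) + B*(↑(2:ℕ)*t^(2-1)) + C*1) t :=
      ((((hasDerivAt_pow 3 t).const_mul A).add
        ((hasDerivAt_pow 2 t).const_mul B)).add
        ((hasDerivAt_id t).const_mul C)).add_const D
    rw [hve]
    convert h1 using 1
    push_cast
    ring
  have hdiff : Differentiable ℝ v := fun t => (hder t).differentiableAt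
  have hderiv : deriv v = fun t => 3*A*t^2 + 2*B*t + C := funext fun t => (hder t).deriv
  have hcont : Continuous v := hdiff.continuous
  obtain ⟨c, hcI, hvc⟩ : ∃ c ∈ Set.Ioo (-1:ℝ) 1, v c = 0 := by
    have h := intermediate_value_Ioo' (by norm_num : (-1:ℝ) ≤ 1)
      (hcont.continuousOn : ContinuousOn v (Set.Icc (-1) 1))
    obtain ⟨c, hc1, hc2⟩ := h ⟨hv1, hvm1⟩
    exact ⟨c, hc1, hc2⟩
  have hsigns : (∀ t ∈ Set.Ico (-1:ℝ) c, 0 < v t) ∧ (∀ t ∈ Set.Ioc c 1, v t < 0) := by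
    rcases lt_or_ge (3*A + B) 0 with hcase | hcase
    · -- strictly decreasing case
      have hX : (3-p)*τ^2 - 3*(p-1) < 0 := by
        have h2 : 3*A + B = 2*(1+τ^2)*((3-p)*τ^2 - 3*(p-1)) := by rw [hA, hB]; ring
        nlinarith [hT]
      have hkey : B^2 - 3*A*C < 0 := by
        have hfac : B^2 - 3*A*C = 4*τ^2*(1+τ^2)^2*(9*(1-p) + τ^2*(3-p)^2) := by
          rw [hA, hB, hC]; ring
        have h3 : 9*(1-p) + τ^2*(3-p)^2 < 0 := by nlinarith [hX]
        have h4 : (0:ℝ) < 4*τ^2*(1+τ^2)^2 := by positivity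
        rw [hfac]; nlinarith
      have hanti : StrictAnti v := by
        apply strictAnti_of_deriv_neg
        intro t
        rw [hderiv]
        show 3*A*t^2 + 2*B*t + C < 0
        nlinarith [sq_nonneg (3*A*t + B), hkey, hAneg]
      constructor
      · intro t ht
        have h := hanti ht.2
        rwa [hvc] at h
      · intro t ht
        have h := hanti ht.1
        rwa [hvc] at h
    · -- convex case
      have hderiv2 : ∀ x : ℝ, deriv^[2] v x = 6*A*x + 2*B := by
        intro x
        rw [Function.iterate_succ, Function.iterate_one, Function.comp_apply, hderiv]
        have h1 : HasDerivAt (fun t : ℝ => 3*A*t^2 + 2*B*t + C)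
            ((3*A)*(↑(2:ℕ)*x^(2-1)) + (2*B)*1) x :=
          (((hasDerivAt_pow 2 x).const_mul (3*A)).add
            ((hasDerivAt_id x).const_mul (2*B))).add_const C
        have h2 := h1.deriv
        rw [h2]
        push_cast
        ring
      have hconv : ConvexOn ℝ (Set.Iic (1:ℝ)) v := by
        apply convexOn_of_deriv2_nonneg (convex_Iic 1) hcont.continuousOn
          hdiff.differentiableOn
        · rw [hderiv]
          apply Differentiable.differentiableOn
          fun_prop
        · intro x hx
          rw [interior_Iic, Set.mem_Iio] at hx
          rw [hderiv2]
          nlinarith [hAneg, hx.le, hcase]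
      have hmem : ∀ x : ℝ, x ≤ 1 → x ∈ Set.Iic (1:ℝ) := fun x hx => hx
      have hc1 : c < 1 := hcI.2
      constructor
      · intro t ht
        by_contra hle
        push_neg at hle
        have htc : t < c := ht.2
        have ht1 : (0:ℝ) < 1 - t := by linarith
        obtain ⟨lam, hlam⟩ : ∃ a : ℝ, a = (1 - c)/(1 - t) := ⟨_, rfl⟩
        obtain ⟨mu, hmu⟩ : ∃ a : ℝ, a = (c - t)/(1 - t) := ⟨_, rfl⟩
        have hlpos : 0 < lam := by rw [hlam]; apply div_pos <;> linarith
        have hmupos : 0 < mu := by rw [hmu]; apply div_pos <;> linarith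
        have hsum : lam + mu = 1 := by rw [hlam, hmu]; field_simp; ring
        have h := hconv.2 (hmem t (by linarith)) (hmem 1 le_rfl)
          hlpos.le hmupos.le hsum
        rw [smul_eq_mul, smul_eq_mul, smul_eq_mul, smul_eq_mul] at h
        have hcomb : lam * t + mu * 1 = c := by
          rw [hlam, hmu]; field_simp; ring
        rw [hcomb, hvc] at h
        nlinarith [mul_nonpos_of_nonneg_of_nonpos hlpos.le hle,
          mul_neg_of_pos_of_neg hmupos hv1]
      · intro t ht
        rcases eq_or_lt_of_le ht.2 with h1 | h1
        · rw [h1]; exact hv1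
        · have htc : c < t := ht.1
          have hc1' : (0:ℝ) < 1 - c := by linarith
          obtain ⟨lam, hlam⟩ : ∃ a : ℝ, a = (1 - t)/(1 - c) := ⟨_, rfl⟩
          obtain ⟨mu, hmu⟩ : ∃ a : ℝ, a = (t - c)/(1 - c) := ⟨_, rfl⟩
          have hlpos : 0 < lam := by rw [hlam]; apply div_pos <;> linarith
          have hmupos : 0 < mu := by rw [hmu]; apply div_pos <;> linarith
          have hsum : lam + mu = 1 := by rw [hlam, hmu]; field_simp; ring
          have h := hconv.2 (hmem c hc1.le) (hmem 1 le_rfl)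
            hlpos.le hmupos.le hsum
          rw [smul_eq_mul, smul_eq_mul, smul_eq_mul, smul_eq_mul] at h
          have hcomb : lam * c + mu * 1 = t := by
            rw [hlam, hmu]; field_simp; ring
          rw [hcomb, hvc] at h
          nlinarith [mul_neg_of_pos_of_neg hmupos hv1]
  refine ⟨c, ⟨hcI, hvc, hsigns.1, hsigns.2⟩, ?_⟩
  rintro y ⟨hyI, hy0, -, -⟩
  rcases lt_trichotomy y c with h | h | h
  · exfalso
    have hpos := hsigns.1 y ⟨hyI.1.le, h⟩
    rw [hy0] at hpos; exact lt_irrefl 0 hpos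
  · exact h
  · exfalso
    have hneg := hsigns.2 y ⟨h, hyI.2.le⟩
    rw [hy0] at hneg; exact lt_irrefl 0 hneg
end

section
/- Let 1<p<2, τ>0, g(t)=(1-t)^p, f(t)=((1+t)²+τ²(1-t)²)^{p/2}. Then for t∈(-1,1), the sign of the torsion expression f'''(t)g''(t) - g'''(t)f''(t) equals the sign of f'''(t) - ((2-p)/(1-t))·f''(t), and this equals the sign of the cubic v(t) defined in the paper. -/
lemma sign_mul_of_pos' {c : ℝ} (hc : 0 < c) (x : ℝ) :
    Real.sign (c * x) = Real.sign x := by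
  rcases lt_trichotomy x 0 with h | h | h
  · rw [Real.sign_of_neg h, Real.sign_of_neg (mul_neg_of_pos_of_neg hc h)]
  · simp [h]
  · rw [Real.sign_of_pos h, Real.sign_of_pos (mul_pos hc h)]

theorem stmt_7 (p τ : ℝ) (hp1 : 1 < p) (hp2 : p < 2) (hτ : 0 < τ)
    (g f v : ℝ → ℝ)
    (hg : g = fun t => (1-t) ^ p)
    (hf : f = fun t => ((1+t)^2 + τ^2*(1-t)^2) ^ (p/2))
    (hv : v = fun t => -(1+τ^2)^2*(p-1)*t^3 + (1+τ^2)*(3*τ^2+τ^2*p+3-3*p)*t^2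
      + (2*τ^2*p-9*τ^4+τ^4*p+3-3*p-6*τ^2)*t - p + 5*τ^4 + 2*τ^2*p - τ^4*p - 10*τ^2 + 1) :
    ∀ t ∈ Set.Ioo (-1 : ℝ) 1,
      Real.sign (iteratedDeriv 3 f t * iteratedDeriv 2 g t
          - iteratedDeriv 3 g t * iteratedDeriv 2 f t)
        = Real.sign (iteratedDeriv 3 f t - ((2-p)/(1-t)) * iteratedDeriv 2 f t) ∧
      Real.sign (iteratedDeriv 3 f t - ((2-p)/(1-t)) * iteratedDeriv 2 f t)
        = Real.sign (v t) := by
  subst hg hf hv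
  intro t ht
  obtain ⟨ht1, ht2⟩ := ht
  have h1t : (0:ℝ) < 1 - t := by linarith
  have hp0 : (0:ℝ) < p := by linarith
  have hQV : ∀ s : ℝ, (0:ℝ) < (1+s)^2 + τ^2*(1-s)^2 := by
    intro s
    rcases le_or_gt s 0 with h | h
    · nlinarith [sq_nonneg (1+s), mul_pos hτ hτ, mul_nonneg (mul_pos hτ hτ).le
        (mul_nonneg (neg_nonneg.2 h) (by linarith : (0:ℝ) ≤ 2 - s))]
    · nlinarith [sq_nonneg (1-s), mul_pos hτ hτ]
  -- building blocks
  have hid : ∀ s : ℝ, HasDerivAt (fun u : ℝ => 1 + u) 1 s := fun s => by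
    simpa using (hasDerivAt_id s).const_add (1:ℝ)
  have hsub : ∀ s : ℝ, HasDerivAt (fun u : ℝ => 1 - u) (-1) s := fun s => by
    exact ((hasDerivAt_const s (1:ℝ)).sub (hasDerivAt_id' s)).congr_deriv (by ring)
  have hQd : ∀ s : ℝ, HasDerivAt (fun u : ℝ => (1+u)^2 + τ^2*(1-u)^2)
      (2*(1+s) - 2*τ^2*(1-s)) s := by
    intro s
    have h1 := (hid s).pow 2
    have h2 := ((hsub s).pow 2).const_mul (τ^2)
    have h3 := h1.add h2
    refine h3.congr_deriv ?_
    push_cast; ring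
  have hQ'd : ∀ s : ℝ, HasDerivAt (fun u : ℝ => 2*(1+u) - 2*τ^2*(1-u)) (2 + 2*τ^2) s := by
    intro s
    have h3 := ((hid s).const_mul (2:ℝ)).sub ((hsub s).const_mul (2*τ^2))
    refine h3.congr_deriv ?_
    ring
  -- f chain
  have hfd : ∀ s : ℝ, HasDerivAt (fun u : ℝ => ((1+u)^2 + τ^2*(1-u)^2) ^ (p/2))
      ((2*(1+s) - 2*τ^2*(1-s)) * (p/2) * ((1+s)^2 + τ^2*(1-s)^2) ^ (p/2-1)) s :=
    fun s => (hQd s).rpow_const (Or.inl (hQV s).ne')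
  have hfd2 : ∀ s : ℝ, HasDerivAt
      (fun s : ℝ => (2*(1+s) - 2*τ^2*(1-s)) * (p/2) * ((1+s)^2 + τ^2*(1-s)^2) ^ (p/2-1))
      (p*(p-2)/4 * ((1+s)^2 + τ^2*(1-s)^2) ^ (p/2-2) * (2*(1+s) - 2*τ^2*(1-s))^2
        + p*(1+τ^2) * ((1+s)^2 + τ^2*(1-s)^2) ^ (p/2-1)) s := by
    intro s
    have h := ((hQ'd s).mul_const (p/2)).mul ((hQd s).rpow_const (p := p/2-1) (Or.inl (hQV s).ne'))
    refine h.congr_deriv ?_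
    rw [show p/2-1-1 = p/2-2 from by ring]
    ring
  have hfd3 : ∀ s : ℝ, HasDerivAt
      (fun s : ℝ => p*(p-2)/4 * ((1+s)^2 + τ^2*(1-s)^2) ^ (p/2-2) * (2*(1+s) - 2*τ^2*(1-s))^2
        + p*(1+τ^2) * ((1+s)^2 + τ^2*(1-s)^2) ^ (p/2-1))
      (p*(p-2)*(p-4)/8 * ((1+s)^2 + τ^2*(1-s)^2) ^ (p/2-3) * (2*(1+s) - 2*τ^2*(1-s))^3
        + 3*p*(p-2)*(1+τ^2)/2 * ((1+s)^2 + τ^2*(1-s)^2) ^ (p/2-2) * (2*(1+s) - 2*τ^2*(1-s))) s := by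
    intro s
    have hA := (((hQd s).rpow_const (p := p/2-2) (Or.inl (hQV s).ne')).const_mul (p*(p-2)/4)).mul
      ((hQ'd s).pow 2)
    have hB := ((hQd s).rpow_const (p := p/2-1) (Or.inl (hQV s).ne')).const_mul (p*(1+τ^2))
    have h := hA.add hB
    refine h.congr_deriv ?_
    rw [show p/2-2-1 = p/2-3 from by ring, show p/2-1-1 = p/2-2 from by ring]
    simp only [Pi.pow_apply]
    push_cast; ring
  -- g chain (only for s < 1)
  have hgd : ∀ s : ℝ, s < 1 → HasDerivAt (fun u : ℝ => (1-u) ^ p) (-(p*(1-s)^(p-1))) s := by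
    intro s hs
    have h := (hsub s).rpow_const (p := p) (Or.inl (by linarith : (0:ℝ) < 1-s).ne')
    refine h.congr_deriv ?_
    ring
  have hgd2 : ∀ s : ℝ, s < 1 → HasDerivAt (fun s : ℝ => -(p*(1-s)^(p-1)))
      (p*(p-1)*((1-s)^(p-3)*(1-s))) s := by
    intro s hs
    have h := (((hsub s).rpow_const (p := p-1)
      (Or.inl (by linarith : (0:ℝ) < 1-s).ne')).const_mul p).neg
    refine h.congr_deriv ?_
    rw [show p-1-1 = p-3+1 from by ring, Real.rpow_add (by linarith) (p-3) 1, Real.rpow_one]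
    ring
  have hgd3 : ∀ s : ℝ, s < 1 → HasDerivAt (fun s : ℝ => p*(p-1)*((1-s)^(p-3)*(1-s)))
      (-(p*(p-1)*(p-2)*(1-s)^(p-3))) s := by
    intro s hs
    have h := (((hsub s).rpow_const (p := p-3)
      (Or.inl (by linarith : (0:ℝ) < 1-s).ne')).mul (hsub s)).const_mul (p*(p-1))
    refine h.congr_deriv ?_
    rw [show p-3-1 = p-3 + -1 from by ring, Real.rpow_add (by linarith) (p-3) (-1),
      Real.rpow_neg_one]
    have : (1:ℝ) - s ≠ 0 := by linarith
    field_simp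
    ring
  -- iterated derivatives of f
  have hdf1 : deriv (fun t : ℝ => ((1+t)^2 + τ^2*(1-t)^2) ^ (p/2))
      = fun s => (2*(1+s) - 2*τ^2*(1-s)) * (p/2) * ((1+s)^2 + τ^2*(1-s)^2) ^ (p/2-1) :=
    funext fun s => (hfd s).deriv
  have hI2f : iteratedDeriv 2 (fun t : ℝ => ((1+t)^2 + τ^2*(1-t)^2) ^ (p/2))
      = fun s => p*(p-2)/4 * ((1+s)^2 + τ^2*(1-s)^2) ^ (p/2-2) * (2*(1+s) - 2*τ^2*(1-s))^2
        + p*(1+τ^2) * ((1+s)^2 + τ^2*(1-s)^2) ^ (p/2-1) := by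
    have h1 : iteratedDeriv 2 (fun t : ℝ => ((1+t)^2 + τ^2*(1-t)^2) ^ (p/2))
        = deriv (iteratedDeriv 1 (fun t : ℝ => ((1+t)^2 + τ^2*(1-t)^2) ^ (p/2))) :=
      iteratedDeriv_succ
    rw [h1, iteratedDeriv_one, hdf1]
    exact funext fun s => (hfd2 s).deriv
  have hI3f : iteratedDeriv 3 (fun t : ℝ => ((1+t)^2 + τ^2*(1-t)^2) ^ (p/2))
      = fun s => p*(p-2)*(p-4)/8 * ((1+s)^2 + τ^2*(1-s)^2) ^ (p/2-3) * (2*(1+s) - 2*τ^2*(1-s))^3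
        + 3*p*(p-2)*(1+τ^2)/2 * ((1+s)^2 + τ^2*(1-s)^2) ^ (p/2-2) * (2*(1+s) - 2*τ^2*(1-s)) := by
    have h1 : iteratedDeriv 3 (fun t : ℝ => ((1+t)^2 + τ^2*(1-t)^2) ^ (p/2))
        = deriv (iteratedDeriv 2 (fun t : ℝ => ((1+t)^2 + τ^2*(1-t)^2) ^ (p/2))) :=
      iteratedDeriv_succ
    rw [h1, hI2f]
    exact funext fun s => (hfd3 s).deriv
  -- iterated derivatives of g at t
  have hg1 : ∀ s : ℝ, s < 1 → deriv (fun u : ℝ => (1-u) ^ p) s = -(p*(1-s)^(p-1)) :=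
    fun s hs => (hgd s hs).deriv
  have hg2 : ∀ s : ℝ, s < 1 → deriv (deriv (fun u : ℝ => (1-u) ^ p)) s
      = p*(p-1)*((1-s)^(p-3)*(1-s)) := by
    intro s hs
    have hev : deriv (fun u : ℝ => (1-u) ^ p) =ᶠ[nhds s]
        (fun s => -(p*(1-s)^(p-1))) :=
      Filter.eventuallyEq_of_mem (Iio_mem_nhds hs) (fun u hu => hg1 u hu)
    rw [hev.deriv_eq]
    exact (hgd2 s hs).deriv
  have hg3 : deriv (deriv (deriv (fun u : ℝ => (1-u) ^ p))) t
      = -(p*(p-1)*(p-2)*(1-t)^(p-3)) := by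
    have hev : deriv (deriv (fun u : ℝ => (1-u) ^ p)) =ᶠ[nhds t]
        (fun s => p*(p-1)*((1-s)^(p-3)*(1-s))) :=
      Filter.eventuallyEq_of_mem (Iio_mem_nhds ht2) (fun u hu => hg2 u hu)
    rw [hev.deriv_eq]
    exact (hgd3 t ht2).deriv
  have hgI2 : iteratedDeriv 2 (fun t : ℝ => (1-t) ^ p) t = p*(p-1)*((1-t)^(p-3)*(1-t)) := by
    have h1 : iteratedDeriv 2 (fun t : ℝ => (1-t) ^ p)
        = deriv (iteratedDeriv 1 (fun t : ℝ => (1-t) ^ p)) := iteratedDeriv_succ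
    rw [h1, iteratedDeriv_one]
    exact hg2 t ht2
  have hgI3 : iteratedDeriv 3 (fun t : ℝ => (1-t) ^ p) t
      = -(p*(p-1)*(p-2)*(1-t)^(p-3)) := by
    have h1 : iteratedDeriv 3 (fun t : ℝ => (1-t) ^ p)
        = deriv (iteratedDeriv 2 (fun t : ℝ => (1-t) ^ p)) := iteratedDeriv_succ
    have h2 : iteratedDeriv 2 (fun t : ℝ => (1-t) ^ p)
        = deriv (iteratedDeriv 1 (fun t : ℝ => (1-t) ^ p)) := iteratedDeriv_succ
    rw [h1, h2, iteratedDeriv_one]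
    exact hg3
  simp only [hI2f, hI3f, hgI2, hgI3]
  -- positivity facts
  have hQt : (0:ℝ) < (1+t)^2 + τ^2*(1-t)^2 := hQV t
  have hXpos : (0:ℝ) < ((1+t)^2 + τ^2*(1-t)^2) ^ (p/2-3) := Real.rpow_pos_of_pos hQt _
  have hYpos : (0:ℝ) < (1-t)^(p-3) := Real.rpow_pos_of_pos h1t _
  have hG2pos : (0:ℝ) < p*(p-1)*((1-t)^(p-3)*(1-t)) :=
    mul_pos (mul_pos hp0 (by linarith)) (mul_pos hYpos h1t)
  have e2 : ((1+t)^2 + τ^2*(1-t)^2) ^ (p/2-2)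
      = ((1+t)^2 + τ^2*(1-t)^2) ^ (p/2-3) * ((1+t)^2 + τ^2*(1-t)^2) := by
    rw [show p/2-2 = p/2-3+1 from by ring, Real.rpow_add hQt, Real.rpow_one]
  have e1 : ((1+t)^2 + τ^2*(1-t)^2) ^ (p/2-1)
      = ((1+t)^2 + τ^2*(1-t)^2) ^ (p/2-3) * ((1+t)^2 + τ^2*(1-t)^2)^(2:ℕ) := by
    rw [show p/2-1 = p/2-3+2 from by ring, Real.rpow_add hQt,
      show (2:ℝ) = ((2:ℕ):ℝ) from by norm_num, Real.rpow_natCast]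
  constructor
  · -- first equality
    have main1 : ∀ a b : ℝ,
        Real.sign (a * (p*(p-1)*((1-t)^(p-3)*(1-t))) - -(p*(p-1)*(p-2)*(1-t)^(p-3)) * b)
        = Real.sign (a - (2-p)/(1-t) * b) := by
      intro a b
      have hkey : a * (p*(p-1)*((1-t)^(p-3)*(1-t))) - -(p*(p-1)*(p-2)*(1-t)^(p-3)) * b
          = (p*(p-1)*((1-t)^(p-3)*(1-t))) * (a - (2-p)/(1-t) * b) := by
        field_simp
        ring
      rw [hkey, sign_mul_of_pos' hG2pos]
    exact main1 _ _
  · -- second equality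
    rw [e1, e2]
    have hCpos : (0:ℝ) < 2*p*(2-p) * ((1+t)^2 + τ^2*(1-t)^2) ^ (p/2-3) / (1-t) :=
      div_pos (mul_pos (mul_pos (mul_pos two_pos hp0) (by linarith)) hXpos) h1t
    have hkey : (p*(p-2)*(p-4)/8 * ((1+t)^2 + τ^2*(1-t)^2) ^ (p/2-3) * (2*(1+t) - 2*τ^2*(1-t))^3
          + 3*p*(p-2)*(1+τ^2)/2 * (((1+t)^2 + τ^2*(1-t)^2) ^ (p/2-3) * ((1+t)^2 + τ^2*(1-t)^2))
            * (2*(1+t) - 2*τ^2*(1-t)))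
        - (2-p)/(1-t) * (p*(p-2)/4 * (((1+t)^2 + τ^2*(1-t)^2) ^ (p/2-3) * ((1+t)^2 + τ^2*(1-t)^2))
            * (2*(1+t) - 2*τ^2*(1-t))^2
          + p*(1+τ^2) * (((1+t)^2 + τ^2*(1-t)^2) ^ (p/2-3) * ((1+t)^2 + τ^2*(1-t)^2)^(2:ℕ)))
        = (2*p*(2-p) * ((1+t)^2 + τ^2*(1-t)^2) ^ (p/2-3) / (1-t))
          * (-(1+τ^2)^2*(p-1)*t^3 + (1+τ^2)*(3*τ^2+τ^2*p+3-3*p)*t^2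
            + (2*τ^2*p-9*τ^4+τ^4*p+3-3*p-6*τ^2)*t - p + 5*τ^4 + 2*τ^2*p - τ^4*p - 10*τ^2 + 1) := by
      field_simp
      ring
    rw [hkey, sign_mul_of_pos' hCpos]
end

section
/- Let I ⊂ ℝ be an interval, g, f ∈ C³(I) with g''>0 on I, and suppose the curve v(s)=(g'(s),f'(s)) is strictly convex on (a₀,c) and strictly concave on (c,b₀) for some c ∈ (a₀,b₀) ⊂ I. Then for every P with 0<P<min{c-a₀, b₀-c} there exist a ∈ (a₀,c) and b = a+P ∈ (c,b₀) such that the determinant of the 3×3 matrix with rows (1, 1, a-b), (g'(a), g'(b), g(a)-g(b)), (f'(a), f'(b), f(a)-f(b)) is zero. -/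
open Set intervalIntegral

noncomputable def Dexpr (f g : ℝ → ℝ) (a b : ℝ) : ℝ :=
  (deriv g b * (f a - f b) - (g a - g b) * deriv f b)
  - (deriv g a * (f a - f b) - (g a - g b) * deriv f a)
  + (a - b) * (deriv g a * deriv f b - deriv g b * deriv f a)

private lemma derivs3 (f : ℝ → ℝ) (hf : ContDiff ℝ 3 f) :
    Differentiable ℝ f ∧ Differentiable ℝ (deriv f) ∧ Differentiable ℝ (deriv (deriv f)) ∧
      Continuous (deriv (deriv (deriv f))) := by
  rw [show (3 : WithTop ℕ∞) = 2+1 by rfl, contDiff_succ_iff_deriv] at hf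
  obtain ⟨h1, -, hf⟩ := hf
  rw [show (2 : WithTop ℕ∞) = 1+1 by rfl, contDiff_succ_iff_deriv] at hf
  obtain ⟨h2, -, hf⟩ := hf
  rw [show (1 : WithTop ℕ∞) = 0+1 by rfl, contDiff_succ_iff_deriv] at hf
  exact ⟨h1, h2, hf.1, hf.2.2.continuous⟩

private lemma cup_pos (f g : ℝ → ℝ) (a b : ℝ) (hab : a < b)
    (hf : ContDiff ℝ 3 f) (hg : ContDiff ℝ 3 g)
    (hg2 : ∀ s ∈ Icc a b, 0 < deriv (deriv g) s)
    (htor : ∀ s ∈ Ioo a b,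
      0 < deriv (deriv (deriv f)) s * deriv (deriv g) s
          - deriv (deriv (deriv g)) s * deriv (deriv f) s) :
    0 < Dexpr f g a b := by
  obtain ⟨hfd, hFd, hF2d, hF3c⟩ := derivs3 f hf
  obtain ⟨hgd, hGd, hG2d, hG3c⟩ := derivs3 g hg
  set F := deriv f with hF
  set G := deriv g with hG
  set F2 := deriv F with hF2
  set G2 := deriv G with hG2
  -- G strictly increasing on [a,b]
  have hGmono : StrictMonoOn G (Icc a b) := by
    apply strictMonoOn_of_deriv_pos (convex_Icc a b) hGd.continuous.continuousOn
    intro x hx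
    rw [interior_Icc] at hx
    exact hg2 x (Ioo_subset_Icc_self hx)
  have hA : 0 < G b - G a :=
    sub_pos.mpr (hGmono ⟨le_rfl, hab.le⟩ ⟨hab.le, le_rfl⟩ hab)
  set A : ℝ := G b - G a with hAdef
  set B : ℝ := F b - F a with hBdef
  -- φ = F2/G2 strictly increasing on [a,b]
  set φ : ℝ → ℝ := fun s => F2 s / G2 s with hφdef
  have hφmono : StrictMonoOn φ (Icc a b) := by
    apply strictMonoOn_of_deriv_pos (convex_Icc a b)
    · exact ContinuousOn.div hF2d.continuous.continuousOn hG2d.continuous.continuousOn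
        (fun x hx => (hg2 x hx).ne')
    · intro x hx
      rw [interior_Icc] at hx
      have hx' : x ∈ Icc a b := Ioo_subset_Icc_self hx
      have hd : HasDerivAt φ
          ((deriv F2 x * G2 x - F2 x * deriv G2 x) / (G2 x)^2) x :=
        (hF2d x).hasDerivAt.div (hG2d x).hasDerivAt (hg2 x hx').ne'
      rw [hd.deriv]
      apply div_pos ?_ (pow_pos (hg2 x hx') 2)
      have := htor x hx
      nlinarith [this]
  -- the function h
  set h : ℝ → ℝ := fun t => A * (F t - F a) - B * (G t - G a) with hhdef
  have hder : ∀ t : ℝ, HasDerivAt h (A * F2 t - B * G2 t) t := by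
    intro t
    exact (((hFd t).hasDerivAt.sub_const (F a)).const_mul A).sub
      (((hGd t).hasDerivAt.sub_const (G a)).const_mul B)
  have hdiff : Differentiable ℝ h := fun t => (hder t).differentiableAt
  have hha : h a = 0 := by simp [hhdef]
  have hhb : h b = 0 := by simp [hhdef, hAdef, hBdef]; ring
  -- h < 0 on (a,b)
  have hneg : ∀ t ∈ Ioo a b, h t < 0 := by
    intro t ht
    by_contra hcon
    push_neg at hcon
    obtain ⟨ξ₁, hξ₁, hs1⟩ := exists_deriv_eq_slope h ht.1
      hdiff.continuous.continuousOn hdiff.differentiableOn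
    obtain ⟨ξ₂, hξ₂, hs2⟩ := exists_deriv_eq_slope h ht.2
      hdiff.continuous.continuousOn hdiff.differentiableOn
    have hd1 : deriv h ξ₁ = A * F2 ξ₁ - B * G2 ξ₁ := (hder ξ₁).deriv
    have hd2 : deriv h ξ₂ = A * F2 ξ₂ - B * G2 ξ₂ := (hder ξ₂).deriv
    have hge : 0 ≤ A * F2 ξ₁ - B * G2 ξ₁ := by
      rw [← hd1, hs1, hha]
      apply div_nonneg (by linarith) (by linarith [hξ₁.2, ht.1])
    have hle : A * F2 ξ₂ - B * G2 ξ₂ ≤ 0 := by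
      rw [← hd2, hs2, hhb]
      apply div_nonpos_of_nonpos_of_nonneg (by linarith) (by linarith [ht.2])
    have hξlt : ξ₁ < ξ₂ := lt_trans hξ₁.2 hξ₂.1
    have hm1 : ξ₁ ∈ Icc a b := ⟨hξ₁.1.le, le_trans hξ₁.2.le ht.2.le⟩
    have hm2 : ξ₂ ∈ Icc a b := ⟨le_trans ht.1.le hξ₂.1.le, hξ₂.2.le⟩
    have hφlt : φ ξ₁ < φ ξ₂ := hφmono hm1 hm2 hξlt
    have hp1 : 0 < G2 ξ₁ := hg2 ξ₁ hm1
    have hp2 : 0 < G2 ξ₂ := hg2 ξ₂ hm2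
    have hcross : F2 ξ₁ * G2 ξ₂ < F2 ξ₂ * G2 ξ₁ := by
      rwa [hφdef, div_lt_div_iff₀ hp1 hp2] at hφlt
    nlinarith [mul_le_mul_of_nonneg_right hge hp2.le,
      mul_le_mul_of_nonneg_right hle hp1.le, mul_lt_mul_of_pos_left hcross hA]
  -- integrate
  set H : ℝ → ℝ := fun t => A * (f t - F a * t) - B * (g t - G a * t) with hHdef
  have hH : ∀ t : ℝ, HasDerivAt H (h t) t := by
    intro t
    have h1 : HasDerivAt (fun t => f t - F a * t) (F t - F a) t := by
      exact ((hfd t).hasDerivAt.sub ((hasDerivAt_id t).const_mul (F a))).congr_deriv (by ring)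
    have h2 : HasDerivAt (fun t => g t - G a * t) (G t - G a) t := by
      exact ((hgd t).hasDerivAt.sub ((hasDerivAt_id t).const_mul (G a))).congr_deriv (by ring)
    exact (h1.const_mul A).sub (h2.const_mul B)
  have hint : IntervalIntegrable h MeasureTheory.volume a b :=
    hdiff.continuous.intervalIntegrable a b
  have heq : ∫ t in a..b, h t = H b - H a :=
    integral_eq_sub_of_hasDerivAt (fun t _ => hH t) hint
  have hposint : 0 < ∫ t in a..b, -h t := by
    apply intervalIntegral_pos_of_pos_on
      ((hdiff.continuous.neg).intervalIntegrable a b)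
      (fun x hx => by simpa using hneg x hx) hab
  rw [intervalIntegral.integral_neg, heq] at hposint
  have : Dexpr f g a b = -(H b - H a) := by
    simp only [Dexpr, hHdef, hAdef, hBdef, ← hF, ← hG]
    ring
  linarith [this ▸ hposint]

private lemma cup_neg (f g : ℝ → ℝ) (a b : ℝ) (hab : a < b)
    (hf : ContDiff ℝ 3 f) (hg : ContDiff ℝ 3 g)
    (hg2 : ∀ s ∈ Icc a b, 0 < deriv (deriv g) s)
    (htor : ∀ s ∈ Ioo a b,
      deriv (deriv (deriv f)) s * deriv (deriv g) s
        - deriv (deriv (deriv g)) s * deriv (deriv f) s < 0) :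
    Dexpr f g a b < 0 := by
  have hnf : ContDiff ℝ 3 (fun x => -f x) := hf.neg
  have e1 : deriv (fun x => -f x) = fun x => -deriv f x := by
    funext x; exact deriv.neg
  have e2 : deriv (deriv (fun x => -f x)) = fun x => -deriv (deriv f) x := by
    rw [e1]; funext x; exact deriv.neg
  have e3 : deriv (deriv (deriv (fun x => -f x))) = fun x => -deriv (deriv (deriv f)) x := by
    rw [e2]; funext x; exact deriv.neg
  have key := cup_pos (fun x => -f x) g a b hab hnf hg hg2 ?_
  · have : Dexpr (fun x => -f x) g a b = -Dexpr f g a b := by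
      simp only [Dexpr, e1]
      ring
    linarith [this ▸ key]
  · intro s hs
    rw [e3, e2]
    have := htor s hs
    simp only
    nlinarith [this]

theorem stmt_8 (f g : ℝ → ℝ) (a₀ b₀ c : ℝ) (hac : a₀ < c) (hcb : c < b₀)
    (hf : ContDiff ℝ 3 f) (hg : ContDiff ℝ 3 g)
    (hg'' : ∀ s ∈ Set.Icc a₀ b₀, 0 < iteratedDeriv 2 g s)
    (hconv : ∀ s ∈ Set.Ioo a₀ c,
      0 < iteratedDeriv 3 f s * iteratedDeriv 2 g s - iteratedDeriv 3 g s * iteratedDeriv 2 f s)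
    (hconc : ∀ s ∈ Set.Ioo c b₀,
      iteratedDeriv 3 f s * iteratedDeriv 2 g s - iteratedDeriv 3 g s * iteratedDeriv 2 f s < 0) :
    ∀ P : ℝ, 0 < P → P < min (c - a₀) (b₀ - c) →
      ∃ a : ℝ, a ∈ Set.Ioo a₀ c ∧ a + P ∈ Set.Ioo c b₀ ∧
        Matrix.det !![(1 : ℝ), 1, a - (a+P);
                      deriv g a, deriv g (a+P), g a - g (a+P);
                      deriv f a, deriv f (a+P), f a - f (a+P)] = 0 := by
  -- translate iteratedDeriv to deriv
  have ed2 : ∀ h : ℝ → ℝ, iteratedDeriv 2 h = deriv (deriv h) := by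
    intro h
    rw [iteratedDeriv_succ, iteratedDeriv_one]
  have ed3 : ∀ h : ℝ → ℝ, iteratedDeriv 3 h = deriv (deriv (deriv h)) := by
    intro h
    rw [iteratedDeriv_succ, ed2]
  intro P hP hPmin
  have hP1 : P < c - a₀ := lt_of_lt_of_le hPmin (min_le_left _ _)
  have hP2 : P < b₀ - c := lt_of_lt_of_le hPmin (min_le_right _ _)
  -- the function a ↦ Dexpr f g a (a+P)
  obtain ⟨hfd, hFd, hF2d, hF3c⟩ := derivs3 f hf
  obtain ⟨hgd, hGd, hG2d, hG3c⟩ := derivs3 g hg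
  set D : ℝ → ℝ := fun a => Dexpr f g a (a + P) with hDdef
  have hDcont : Continuous D := by
    apply Continuous.add
    apply Continuous.sub
    · exact ((hGd.continuous.comp (continuous_id.add continuous_const)).mul
        (hfd.continuous.sub (hfd.continuous.comp (continuous_id.add continuous_const)))).sub
        ((hgd.continuous.sub (hgd.continuous.comp (continuous_id.add continuous_const))).mul
        (hFd.continuous.comp (continuous_id.add continuous_const)))
    · exact (hGd.continuous.mul
        (hfd.continuous.sub (hfd.continuous.comp (continuous_id.add continuous_const)))).sub
        ((hgd.continuous.sub (hgd.continuous.comp (continuous_id.add continuous_const))).mul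
        hFd.continuous)
    · exact (continuous_id.sub (continuous_id.add continuous_const)).mul
        ((hGd.continuous.mul (hFd.continuous.comp (continuous_id.add continuous_const))).sub
        ((hGd.continuous.comp (continuous_id.add continuous_const)).mul hFd.continuous))
  -- positivity at a = c - P
  have hDpos : 0 < D (c - P) := by
    have hab : c - P < c - P + P := by linarith
    apply cup_pos f g (c - P) (c - P + P) hab hf hg
    · intro s hs
      have hm : s ∈ Set.Icc a₀ b₀ := ⟨by linarith [hs.1], by linarith [hs.2]⟩
      have := hg'' s hm
      rwa [ed2 g] at this
    · intro s hs
      have hs' : s ∈ Set.Ioo a₀ c := ⟨by linarith [hs.1], by linarith [hs.2]⟩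
      have := hconv s hs'
      rw [ed2 f, ed2 g, ed3 f, ed3 g] at this
      exact this
  -- negativity at a = c
  have hDneg : D c < 0 := by
    have hab : c < c + P := by linarith
    apply cup_neg f g c (c + P) hab hf hg
    · intro s hs
      have hm : s ∈ Set.Icc a₀ b₀ := ⟨by linarith [hs.1], by linarith [hs.2]⟩
      have := hg'' s hm
      rwa [ed2 g] at this
    · intro s hs
      have hs' : s ∈ Set.Ioo c b₀ := ⟨hs.1, by linarith [hs.2]⟩
      have := hconc s hs'
      rw [ed2 f, ed2 g, ed3 f, ed3 g] at this
      exact this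
  -- IVT
  have hcP : c - P < c := by linarith
  have h0mem : (0 : ℝ) ∈ Set.Ioo (D c) (D (c - P)) := ⟨hDneg, hDpos⟩
  have := intermediate_value_Ioo' (le_of_lt hcP) hDcont.continuousOn
  obtain ⟨a, ha, hDa⟩ := this h0mem
  refine ⟨a, ⟨by linarith [ha.1], ha.2⟩, ⟨by linarith [ha.1], by linarith [ha.2]⟩, ?_⟩
  have hDa0 : Dexpr f g a (a + P) = 0 := hDa
  simp only [Dexpr] at hDa0
  rw [Matrix.det_fin_three]
  norm_num [Matrix.cons_val_zero, Matrix.cons_val_one, Matrix.cons_val_two, Matrix.vecHead, Matrix.vecTail]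
  linarith [hDa0]
end

section
/- Let 1<p<2, τ real, and define u(z) = τ^p(p-1)(τ²+z²)^{(2-p)/2} − τ²(p-1) + (1+z)^{2-p} − z(2-p) − 1. If |τ| ≤ 0.5 then u(1/(p-1)) ≤ 0. -/
open Real
set_option maxHeartbeats 1000000
set_option linter.unusedVariables false

private lemma bern {x w : ℝ} (hx : 0 ≤ x) (hw0 : 0 ≤ w) (hw1 : w ≤ 1) :
    (1+x)^w ≤ 1 + w*x :=
  rpow_one_add_le_one_add_mul_self (by linarith) hw0 hw1

private lemma my_ratio {x r R : ℝ} (hx : 1 ≤ x) (hr : 0 ≤ r) (hrR : r ≤ R) (hR0 : 0 < R) :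
    x^r - 1 ≤ (r/R)*(x^R - 1) := by
  have hx0 : (0:ℝ) ≤ x := by linarith
  have h1 : x ^ r = (1 + (x ^ R - 1)) ^ (r/R) := by
    rw [show (1 + (x^R - 1)) = x ^ R by ring, ← Real.rpow_mul hx0]
    congr 1
    field_simp
  have hXR : 1 ≤ x ^ R := by
    calc (1:ℝ) = 1 ^ R := (Real.one_rpow R).symm
      _ ≤ x ^ R := Real.rpow_le_rpow (by norm_num) hx hR0.le
  have h2 := bern (x := x^R - 1) (w := r/R) (by linarith) (by positivity)
    (by rw [div_le_one hR0]; exact hrR)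
  rw [h1]
  linarith

private lemma my_slope {α x y : ℝ} (hα0 : 0 ≤ α) (hα1 : α ≤ 1) (hx : 1 < x) (hxy : x ≤ y) :
    (y^α - 1)/(y-1) ≤ (x^α - 1)/(x-1) := by
  have hy : 1 < y := lt_of_lt_of_le hx hxy
  have hy1 : (0:ℝ) < y - 1 := by linarith
  have hx1 : (0:ℝ) < x - 1 := by linarith
  have hy1' : (y - 1) ≠ 0 := ne_of_gt hy1
  have hb : 0 < (x-1)/(y-1) := div_pos hx1 hy1
  have ha : 0 ≤ (y-x)/(y-1) := div_nonneg (by linarith) hy1.le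
  have hab : (y-x)/(y-1) + (x-1)/(y-1) = 1 := by field_simp; ring
  have key := (Real.concaveOn_rpow hα0 hα1).2 (Set.mem_Ici.2 (by norm_num : (0:ℝ) ≤ 1))
    (Set.mem_Ici.2 (by linarith : (0:ℝ) ≤ y)) ha hb.le hab
  simp only [smul_eq_mul] at key
  rw [show (y-x)/(y-1) * 1 + (x-1)/(y-1) * y = x by field_simp; ring] at key
  rw [Real.one_rpow] at key
  have h2 : (x-1)/(y-1) * (y^α - 1) ≤ x^α - 1 := by
    have he : (y-x)/(y-1) = 1 - (x-1)/(y-1) := by field_simp; ring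
    rw [he] at key
    linarith
  rw [div_le_div_iff₀ hy1 hx1]
  calc (y^α - 1) * (x-1) = ((x-1)/(y-1) * (y^α - 1)) * (y - 1) := by field_simp
    _ ≤ (x^α - 1) * (y-1) := mul_le_mul_of_nonneg_right h2 hy1.le

private lemma interval (q a ql qh c1 c2 : ℝ) (hql : 0 < ql) (h1 : ql ≤ q) (h2 : q ≤ qh)
    (hq1 : q < 1) (ha0 : 0 < a) (ha : a ≤ q/2)
    (hc1 : 1 ≤ c1) (hc2 : 1 ≤ c2)
    (cert1 : (1+4/ql^2) ^ ((1-ql)/2) ≤ c1)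
    (cert2 : (1+1/ql) ^ (1-ql) ≤ c2)
    (hsum : qh^2/4*(c1-1) + qh*(c2-1) ≤ 1-ql) :
    a^(1+q)*(1+a^2)^((1-q)/2) + q*((1+q)/q)^(1-q) ≤ 1 + a^2 := by
  have hq0 : 0 < q := lt_of_lt_of_le hql h1
  have hs0 : 0 < 1 - q := by linarith
  have hsh : 0 < 1 - ql := by linarith
  have hqh : 0 < qh := lt_of_lt_of_le hq0 h2
  -- Part 1 : a^(1+q)*(1+a^2)^((1-q)/2) - a^2 ≤ qh^2/4 * ((s/sh)*(c1-1))
  have ha2 : (0:ℝ) < a^2 := by positivity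
  have idT1 : a^(1+q)*(1+a^2)^((1-q)/2) = a^2 * (1+1/a^2)^((1-q)/2) := by
    have e0 : (1 + 1/a^2 : ℝ) = (1+a^2)/a^2 := by field_simp; ring
    rw [e0, Real.div_rpow (by positivity) (by positivity)]
    have e1 : a^(1+q) = a^2 * ((a^2 : ℝ)^((1-q)/2))⁻¹ := by
      rw [← Real.rpow_natCast a 2, ← Real.rpow_mul ha0.le, ← Real.rpow_neg ha0.le,
        ← Real.rpow_add ha0]
      · norm_num
        rw [show ((2:ℝ) + -(2 * ((1-q)/2))) = 1 + q by ring]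
    rw [e1]
    ring
  have hy : (1:ℝ) < 1 + 4/q^2 := by
    have : (0:ℝ) < 4/q^2 := by positivity
    linarith
  have hxy : (1:ℝ) + 4/q^2 ≤ 1 + 1/a^2 := by
    have h4 : 4*a^2 ≤ q^2 := by nlinarith
    have : 4/q^2 ≤ 1/a^2 := by
      rw [div_le_div_iff₀ (by positivity) (by positivity)]
      linarith
    linarith
  have hα0 : (0:ℝ) ≤ (1-q)/2 := by linarith
  have hα1 : (1-q)/2 ≤ 1 := by linarith
  have slope := my_slope hα0 hα1 hy hxy
  have part1 : a^(1+q)*(1+a^2)^((1-q)/2) - a^2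
      ≤ q^2/4 * ((1+4/q^2)^((1-q)/2) - 1) := by
    rw [idT1]
    have e2 : ((1+1/a^2)^((1-q)/2) - 1)/((1+1/a^2)-1) = a^2*((1+1/a^2)^((1-q)/2) - 1) := by
      rw [show ((1:ℝ)+1/a^2)-1 = 1/a^2 by ring]
      field_simp
    have e3 : ((1+4/q^2)^((1-q)/2) - 1)/((1+4/q^2)-1) = q^2/4*((1+4/q^2)^((1-q)/2) - 1) := by
      rw [show ((1:ℝ)+4/q^2)-1 = 4/q^2 by ring]
      field_simp
    rw [e2, e3] at slope
    linarith
  -- chain part1 to certificate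
  have hxl : (1:ℝ) + 4/q^2 ≤ 1 + 4/ql^2 := by
    have : 4/ql^2 ≥ 4/q^2 := by
      rw [ge_iff_le, div_le_div_iff₀ (by positivity) (by positivity)]
      nlinarith
    linarith
  have mono1 : (1+4/q^2)^((1-q)/2) ≤ (1+4/ql^2)^((1-q)/2) :=
    Real.rpow_le_rpow (by linarith) hxl hα0
  have ratio1 : (1+4/ql^2)^((1-q)/2) - 1 ≤ ((1-q)/(1-ql))*((1+4/ql^2)^((1-ql)/2) - 1) := by
    have := my_ratio (x := 1+4/ql^2) (r := (1-q)/2) (R := (1-ql)/2)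
      (le_add_of_nonneg_right (by positivity)) hα0 (by linarith) (by linarith)
    calc (1+4/ql^2)^((1-q)/2) - 1 ≤ ((1-q)/2)/((1-ql)/2)*((1+4/ql^2)^((1-ql)/2) - 1) := this
      _ = ((1-q)/(1-ql))*((1+4/ql^2)^((1-ql)/2) - 1) := by
          congr 1
          field_simp
  have hXsh1 : (1:ℝ) ≤ (1+4/ql^2)^((1-ql)/2) := by
    calc (1:ℝ) = 1 ^ ((1-ql)/2) := (Real.one_rpow _).symm
      _ ≤ (1+4/ql^2)^((1-ql)/2) :=
          Real.rpow_le_rpow (by norm_num) (le_add_of_nonneg_right (by positivity)) (by linarith)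
  have P1 : a^(1+q)*(1+a^2)^((1-q)/2) - a^2 ≤ qh^2/4 * (((1-q)/(1-ql))*(c1-1)) := by
    have s1 : (1+4/q^2)^((1-q)/2) - 1 ≤ ((1-q)/(1-ql))*(c1-1) := by
      have : ((1-q)/(1-ql))*((1+4/ql^2)^((1-ql)/2) - 1) ≤ ((1-q)/(1-ql))*(c1-1) := by
        apply mul_le_mul_of_nonneg_left (by linarith) (by positivity)
      linarith
    have hq2 : q^2/4 ≤ qh^2/4 := by nlinarith
    have h0 : (0:ℝ) ≤ (1+4/q^2)^((1-q)/2) - 1 := by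
      have : (1:ℝ) = 1 ^ ((1-q)/2) := (Real.one_rpow _).symm
      have h1' : (1:ℝ) ≤ (1+4/q^2)^((1-q)/2) := by
        calc (1:ℝ) = 1 ^ ((1-q)/2) := (Real.one_rpow _).symm
          _ ≤ (1+4/q^2)^((1-q)/2) := Real.rpow_le_rpow (by norm_num) hy.le hα0
      linarith
    calc a^(1+q)*(1+a^2)^((1-q)/2) - a^2 ≤ q^2/4 * ((1+4/q^2)^((1-q)/2) - 1) := part1
      _ ≤ qh^2/4 * (((1-q)/(1-ql))*(c1-1)) := by
          apply mul_le_mul hq2 s1 h0 (by positivity)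
  -- Part 2
  have hX : (1+q)/q = 1 + 1/q := by field_simp; ring
  have hXle : (1:ℝ) + 1/q ≤ 1 + 1/ql := by
    have : 1/q ≤ 1/ql := by
      rw [div_le_div_iff₀ hq0 hql]; linarith
    linarith
  have mono2 : ((1+q)/q)^(1-q) ≤ (1+1/ql)^(1-q) := by
    rw [hX]
    exact Real.rpow_le_rpow (by positivity) hXle (by linarith)
  have ratio2 : (1+1/ql)^(1-q) - 1 ≤ ((1-q)/(1-ql))*((1+1/ql)^(1-ql) - 1) :=
    my_ratio (le_add_of_nonneg_right (by positivity)) (by linarith) (by linarith) hsh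
  have h1X : (1:ℝ) ≤ ((1+q)/q)^(1-q) := by
    rw [hX]
    calc (1:ℝ) = 1 ^ (1-q) := (Real.one_rpow _).symm
      _ ≤ (1+1/q)^(1-q) := Real.rpow_le_rpow (by norm_num) (le_add_of_nonneg_right (by positivity)) (by linarith)
  have P2 : q*((1+q)/q)^(1-q) - q ≤ qh * (((1-q)/(1-ql))*(c2-1)) := by
    have s2 : ((1+q)/q)^(1-q) - 1 ≤ ((1-q)/(1-ql))*(c2-1) := by
      have m : ((1-q)/(1-ql))*((1+1/ql)^(1-ql) - 1) ≤ ((1-q)/(1-ql))*(c2-1) :=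
        mul_le_mul_of_nonneg_left (by linarith) (by positivity)
      linarith
    calc q*((1+q)/q)^(1-q) - q = q * (((1+q)/q)^(1-q) - 1) := by ring
      _ ≤ qh * (((1-q)/(1-ql))*(c2-1)) := by
          apply mul_le_mul h2 s2 (by linarith) hqh.le
  -- combine
  have final : qh^2/4 * (((1-q)/(1-ql))*(c1-1)) + qh * (((1-q)/(1-ql))*(c2-1)) ≤ 1 - q := by
    have e : qh^2/4 * (((1-q)/(1-ql))*(c1-1)) + qh * (((1-q)/(1-ql))*(c2-1))
        = ((1-q)/(1-ql)) * (qh^2/4*(c1-1) + qh*(c2-1)) := by ring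
    rw [e]
    calc ((1-q)/(1-ql)) * (qh^2/4*(c1-1) + qh*(c2-1)) ≤ ((1-q)/(1-ql)) * (1-ql) := by
          apply mul_le_mul_of_nonneg_left hsum (by positivity)
      _ = 1 - q := by field_simp
  linarith

private lemma my_rpow_cert {x c : ℝ} (m n : ℕ) (e : ℝ) (hx : 1 ≤ x) (hc : 0 ≤ c)
    (hn : 0 < n) (he : e = (m:ℝ)/(n:ℝ)) (h : x^m ≤ c^n) : x ^ e ≤ c := by
  subst he
  have hx0 : (0:ℝ) ≤ x := by linarith
  have h1 : x ^ ((m:ℝ)/(n:ℝ)) = (x ^ m : ℝ) ^ ((1:ℝ)/(n:ℝ)) := by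
    rw [← Real.rpow_natCast x m, ← Real.rpow_mul hx0]
    congr 1
    field_simp
  rw [h1]
  calc (x^m : ℝ) ^ ((1:ℝ)/(n:ℝ)) ≤ ((c^n : ℝ)) ^ ((1:ℝ)/(n:ℝ)) :=
        Real.rpow_le_rpow (by positivity) h (by positivity)
    _ = c := by
        rw [← Real.rpow_natCast c n, ← Real.rpow_mul hc]
        rw [show (n:ℝ) * ((1:ℝ)/(n:ℝ)) = 1 by field_simp]
        exact Real.rpow_one c

private lemma exp_3half : Real.exp (3/2) ≤ 50/11 := by
  have h1 : Real.exp 1 ≤ 2.7182818286 := Real.exp_one_lt_d9.le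
  have h3 : Real.exp 3 ≤ (50/11)^2 := by
    have e : Real.exp 3 = (Real.exp 1)^3 := by
      rw [← Real.exp_nat_mul]; norm_num
    rw [e]
    calc (Real.exp 1)^3 ≤ (2.7182818286:ℝ)^3 :=
          pow_le_pow_left₀ (Real.exp_pos 1).le h1 3
      _ ≤ (50/11)^2 := by norm_num
  have h2 : (Real.exp (3/2))^2 = Real.exp 3 := by
    rw [← Real.exp_nat_mul]; norm_num
  nlinarith [Real.exp_pos (3/2), (Real.exp_pos (3/2)).le]

private lemma head (q a : ℝ) (hq0 : 0 < q) (hq : q ≤ 1/4) (ha0 : 0 < a) (ha : a ≤ q/2) :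
    a^(1+q)*(1+a^2)^((1-q)/2) + q*((1+q)/q)^(1-q) ≤ 1 + a^2 := by
  have ha1 : a ≤ 1/8 := by linarith
  have hL0 : Real.log q ≤ 0 := Real.log_nonpos hq0.le (by linarith)
  set L : ℝ := -Real.log q with hLdef
  have hL : 0 ≤ L := by simp only [hLdef]; linarith
  -- T1 bound
  have e1 : a^(1+q) ≤ a := by
    calc a^(1+q) ≤ a^(1:ℝ) :=
          Real.rpow_le_rpow_of_exponent_ge ha0 (by linarith) (by linarith)
      _ = a := Real.rpow_one a
  have e2 : (1+a^2)^((1-q)/2) ≤ 1 + a^2/2 := by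
    calc (1+a^2)^((1-q)/2) ≤ (1+a^2)^((1:ℝ)/2) :=
          Real.rpow_le_rpow_of_exponent_le (by nlinarith) (by linarith)
      _ ≤ 1 + (1/2)*a^2 := bern (by positivity) (by norm_num) (by norm_num)
      _ = 1 + a^2/2 := by ring
  have hT1 : a^(1+q)*(1+a^2)^((1-q)/2) ≤ a*(1 + a^2/2) :=
    mul_le_mul e1 e2 (by positivity) ha0.le
  -- T2 rewrite
  have hT2eq : q*((1+q)/q)^(1-q) = q^q * (1+q)^(1-q) := by
    rw [Real.div_rpow (by linarith) hq0.le]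
    have e3 : q ^ q = q * (q^(1-q))⁻¹ := by
      rw [show (q:ℝ)^q = q ^ (1 + -(1-q)) by rw [show (1 + -(1-q)) = q by ring],
        Real.rpow_one_add' hq0.le (by intro hcon; apply absurd hcon; simp; linarith),
        Real.rpow_neg hq0.le]
    rw [e3]; ring
  -- q^q ≤ 1/(1+qL)
  have hden : (0:ℝ) < 1 + q*L := by positivity
  have hqq : q^q ≤ 1/(1+q*L) := by
    have e4 : q^q = Real.exp (q * Real.log q) := by
      rw [Real.rpow_def_of_pos hq0]; ring_nf
    have e5 : 1 + q*L ≤ Real.exp (-(q * Real.log q)) := by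
      have h := Real.add_one_le_exp (-(q * Real.log q))
      have : 1 + q*L = -(q * Real.log q) + 1 := by simp only [hLdef]; ring
      linarith [this ▸ h]
    rw [e4, le_div_iff₀ hden]
    calc Real.exp (q * Real.log q) * (1+q*L)
        ≤ Real.exp (q * Real.log q) * Real.exp (-(q*Real.log q)) :=
          mul_le_mul_of_nonneg_left e5 (Real.exp_pos _).le
      _ = 1 := by rw [← Real.exp_add]; simp
  have hBq : (1+q)^(1-q) ≤ 1 + q - q^2 := by
    have := bern (x := q) (w := 1-q) hq0.le (by linarith) (by linarith)
    nlinarith [this]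
  have hT2pos : (0:ℝ) < (1+q)^(1-q) := Real.rpow_pos_of_pos (by linarith) _
  have hqqpos : (0:ℝ) < q^q := Real.rpow_pos_of_pos hq0 _
  have hT2 : q^q * (1+q)^(1-q) ≤ (1+q-q^2)/(1+q*L) := by
    calc q^q * (1+q)^(1-q) ≤ (1/(1+q*L)) * (1+q-q^2) := by
          apply mul_le_mul hqq hBq hT2pos.le (by positivity)
      _ = (1+q-q^2)/(1+q*L) := by ring
  -- key : L*W ≥ 3/2 - (5/4)q + q^2/16 where W = 1 - q/2+q^2/4-q^3/16
  have hW : (0:ℝ) < 1 - q/2 + q^2/4 - q^3/16 := by nlinarith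
  have hkey : (3:ℝ)/2 - (5/4)*q + q^2/16 ≤ L * (1 - q/2 + q^2/4 - q^3/16) := by
    rcases le_or_gt q (11/50) with hc | hc
    · have hL32 : (3:ℝ)/2 ≤ L := by
        have h1 : Real.exp (3/2) ≤ 1/q := by
          calc Real.exp (3/2) ≤ 50/11 := exp_3half
            _ ≤ 1/q := by rw [le_div_iff₀ hq0]; linarith [mul_le_mul_of_nonneg_left hc (by norm_num : (0:ℝ) ≤ 50/11)]
        have h2 : (3:ℝ)/2 ≤ Real.log (1/q) := by
          calc (3:ℝ)/2 = Real.log (Real.exp (3/2)) := (Real.log_exp _).symm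
            _ ≤ Real.log (1/q) := Real.log_le_log (Real.exp_pos _) h1
        rwa [one_div, Real.log_inv] at h2
      nlinarith
    · have hL4 : (13772:ℝ)/10000 ≤ L := by
        have h2 : Real.log 4 ≤ Real.log (1/q) := by
          apply Real.log_le_log (by norm_num)
          rw [le_div_iff₀ hq0]; linarith
        have h4 : Real.log 4 = 2 * Real.log 2 := by
          rw [show (4:ℝ) = 2^2 by norm_num, Real.log_pow]; norm_num
        have := Real.log_two_gt_d9
        rw [one_div, Real.log_inv] at h2
        simp only [hLdef]
        nlinarith
      nlinarith
  -- conclude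
  have hfrac : (1+q-q^2)/(1+q*L) ≤ 1 - q/2 + q^2/4 - q^3/16 := by
    rw [div_le_iff₀ hden]
    have expand : (1 - q/2 + q^2/4 - q^3/16) * (1+q*L)
        = (1 - q/2 + q^2/4 - q^3/16) + q*(L*(1 - q/2 + q^2/4 - q^3/16)) := by ring
    rw [expand]
    linarith [mul_le_mul_of_nonneg_left hkey hq0.le]
  have hWa : 1 - q/2 + q^2/4 - q^3/16 ≤ 1 - a + a^2 - a^3/2 := by
    nlinarith [sq_nonneg (q/2 - a), sq_nonneg a]
  calc a^(1+q)*(1+a^2)^((1-q)/2) + q*((1+q)/q)^(1-q)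
      ≤ a*(1+a^2/2) + (1+q-q^2)/(1+q*L) := by
        rw [hT2eq]; exact add_le_add hT1 hT2
    _ ≤ a*(1+a^2/2) + (1 - a + a^2 - a^3/2) := by linarith
    _ = 1 + a^2 := by ring

private lemma core (q a : ℝ) (hq0 : 0 < q) (hq1 : q < 1) (ha0 : 0 < a) (ha : a ≤ q/2) :
    a^(1+q)*(1+a^2)^((1-q)/2) + q*((1+q)/q)^(1-q) ≤ 1 + a^2 := by
  rcases le_or_gt q (1/4) with h0|h0
  · exact head q a hq0 h0 ha0 ha
  rcases le_or_gt q (11/40) with h1|h1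
  · exact interval q a (1/4) (11/40) (23923/5000) (16719/5000) (by norm_num) (by linarith) (by linarith) hq1 ha0 ha (by norm_num) (by norm_num)
      (my_rpow_cert 3 8 _ (by norm_num) (by norm_num) (by norm_num) (by norm_num) (by norm_num))
      (my_rpow_cert 3 4 _ (by norm_num) (by norm_num) (by norm_num) (by norm_num) (by norm_num))
      (by norm_num)
  rcases le_or_gt q (3/10) with h2|h2
  · exact interval q a (11/40) (3/10) (42431/10000) (3801/1250) (by norm_num) (by linarith) (by linarith) hq1 ha0 ha (by norm_num) (by norm_num)
      (my_rpow_cert 29 80 _ (by norm_num) (by norm_num) (by norm_num) (by norm_num) (by norm_num))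
      (my_rpow_cert 29 40 _ (by norm_num) (by norm_num) (by norm_num) (by norm_num) (by norm_num))
      (by norm_num)
  rcases le_or_gt q (13/40) with h3|h3
  · exact interval q a (3/10) (13/40) (3803/1000) (3489/1250) (by norm_num) (by linarith) (by linarith) hq1 ha0 ha (by norm_num) (by norm_num)
      (my_rpow_cert 7 20 _ (by norm_num) (by norm_num) (by norm_num) (by norm_num) (by norm_num))
      (my_rpow_cert 7 10 _ (by norm_num) (by norm_num) (by norm_num) (by norm_num) (by norm_num))
      (by norm_num)
  rcases le_or_gt q (7/20) with h4|h4
  · exact interval q a (13/40) (7/20) (6879/2000) (12911/5000) (by norm_num) (by linarith) (by linarith) hq1 ha0 ha (by norm_num) (by norm_num)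
      (my_rpow_cert 27 80 _ (by norm_num) (by norm_num) (by norm_num) (by norm_num) (by norm_num))
      (my_rpow_cert 27 40 _ (by norm_num) (by norm_num) (by norm_num) (by norm_num) (by norm_num))
      (by norm_num)
  rcases le_or_gt q (3/8) with h5|h5
  · exact interval q a (7/20) (3/8) (15677/5000) (1503/625) (by norm_num) (by linarith) (by linarith) hq1 ha0 ha (by norm_num) (by norm_num)
      (my_rpow_cert 13 40 _ (by norm_num) (by norm_num) (by norm_num) (by norm_num) (by norm_num))
      (my_rpow_cert 13 20 _ (by norm_num) (by norm_num) (by norm_num) (by norm_num) (by norm_num))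
      (by norm_num)
  rcases le_or_gt q (2/5) with h6|h6
  · exact interval q a (3/8) (2/5) (28779/10000) (11263/5000) (by norm_num) (by linarith) (by linarith) hq1 ha0 ha (by norm_num) (by norm_num)
      (my_rpow_cert 5 16 _ (by norm_num) (by norm_num) (by norm_num) (by norm_num) (by norm_num))
      (my_rpow_cert 5 8 _ (by norm_num) (by norm_num) (by norm_num) (by norm_num) (by norm_num))
      (by norm_num)
  rcases le_or_gt q (9/20) with h7|h7
  · exact interval q a (2/5) (9/20) (26577/10000) (10603/5000) (by norm_num) (by linarith) (by linarith) hq1 ha0 ha (by norm_num) (by norm_num)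
      (my_rpow_cert 3 10 _ (by norm_num) (by norm_num) (by norm_num) (by norm_num) (by norm_num))
      (my_rpow_cert 3 5 _ (by norm_num) (by norm_num) (by norm_num) (by norm_num) (by norm_num))
      (by norm_num)
  rcases le_or_gt q (1/2) with h8|h8
  · exact interval q a (9/20) (1/2) (921/400) (19033/10000) (by norm_num) (by linarith) (by linarith) hq1 ha0 ha (by norm_num) (by norm_num)
      (my_rpow_cert 11 40 _ (by norm_num) (by norm_num) (by norm_num) (by norm_num) (by norm_num))
      (my_rpow_cert 11 20 _ (by norm_num) (by norm_num) (by norm_num) (by norm_num) (by norm_num))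
      (by norm_num)
  rcases le_or_gt q (11/20) with h9|h9
  · exact interval q a (1/2) (11/20) (10153/5000) (17321/10000) (by norm_num) (by linarith) (by linarith) hq1 ha0 ha (by norm_num) (by norm_num)
      (my_rpow_cert 1 4 _ (by norm_num) (by norm_num) (by norm_num) (by norm_num) (by norm_num))
      (my_rpow_cert 1 2 _ (by norm_num) (by norm_num) (by norm_num) (by norm_num) (by norm_num))
      (by norm_num)
  rcases le_or_gt q (3/5) with h10|h10
  · exact interval q a (11/20) (3/5) (18173/10000) (797/500) (by norm_num) (by linarith) (by linarith) hq1 ha0 ha (by norm_num) (by norm_num)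
      (my_rpow_cert 9 40 _ (by norm_num) (by norm_num) (by norm_num) (by norm_num) (by norm_num))
      (my_rpow_cert 9 20 _ (by norm_num) (by norm_num) (by norm_num) (by norm_num) (by norm_num))
      (by norm_num)
  rcases le_or_gt q (13/20) with h11|h11
  · exact interval q a (3/5) (13/20) (4117/2500) (2961/2000) (by norm_num) (by linarith) (by linarith) hq1 ha0 ha (by norm_num) (by norm_num)
      (my_rpow_cert 1 5 _ (by norm_num) (by norm_num) (by norm_num) (by norm_num) (by norm_num))
      (my_rpow_cert 2 5 _ (by norm_num) (by norm_num) (by norm_num) (by norm_num) (by norm_num))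
      (by norm_num)
  rcases le_or_gt q (7/10) with h12|h12
  · exact interval q a (13/20) (7/10) (15083/10000) (2771/2000) (by norm_num) (by linarith) (by linarith) hq1 ha0 ha (by norm_num) (by norm_num)
      (my_rpow_cert 7 40 _ (by norm_num) (by norm_num) (by norm_num) (by norm_num) (by norm_num))
      (my_rpow_cert 7 20 _ (by norm_num) (by norm_num) (by norm_num) (by norm_num) (by norm_num))
      (by norm_num)
  rcases le_or_gt q (3/4) with h13|h13
  · exact interval q a (7/10) (3/4) (6971/5000) (261/200) (by norm_num) (by linarith) (by linarith) hq1 ha0 ha (by norm_num) (by norm_num)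
      (my_rpow_cert 3 20 _ (by norm_num) (by norm_num) (by norm_num) (by norm_num) (by norm_num))
      (my_rpow_cert 3 10 _ (by norm_num) (by norm_num) (by norm_num) (by norm_num) (by norm_num))
      (by norm_num)
  rcases le_or_gt q (4/5) with h14|h14
  · exact interval q a (3/4) (4/5) (12991/10000) (309/250) (by norm_num) (by linarith) (by linarith) hq1 ha0 ha (by norm_num) (by norm_num)
      (my_rpow_cert 1 8 _ (by norm_num) (by norm_num) (by norm_num) (by norm_num) (by norm_num))
      (my_rpow_cert 1 4 _ (by norm_num) (by norm_num) (by norm_num) (by norm_num) (by norm_num))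
      (by norm_num)
  rcases le_or_gt q (17/20) with h15|h15
  · exact interval q a (4/5) (17/20) (12191/10000) (11761/10000) (by norm_num) (by linarith) (by linarith) hq1 ha0 ha (by norm_num) (by norm_num)
      (my_rpow_cert 1 10 _ (by norm_num) (by norm_num) (by norm_num) (by norm_num) (by norm_num))
      (my_rpow_cert 1 5 _ (by norm_num) (by norm_num) (by norm_num) (by norm_num) (by norm_num))
      (by norm_num)
  rcases le_or_gt q (9/10) with h16|h16
  · exact interval q a (17/20) (9/10) (1439/1250) (5619/5000) (by norm_num) (by linarith) (by linarith) hq1 ha0 ha (by norm_num) (by norm_num)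
      (my_rpow_cert 3 40 _ (by norm_num) (by norm_num) (by norm_num) (by norm_num) (by norm_num))
      (my_rpow_cert 3 20 _ (by norm_num) (by norm_num) (by norm_num) (by norm_num) (by norm_num))
      (by norm_num)
  rcases le_or_gt q (19/20) with h17|h17
  · exact interval q a (9/10) (19/20) (2733/2500) (1347/1250) (by norm_num) (by linarith) (by linarith) hq1 ha0 ha (by norm_num) (by norm_num)
      (my_rpow_cert 1 20 _ (by norm_num) (by norm_num) (by norm_num) (by norm_num) (by norm_num))
      (my_rpow_cert 1 10 _ (by norm_num) (by norm_num) (by norm_num) (by norm_num) (by norm_num))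
      (by norm_num)
  exact interval q a (19/20) 1 (10433/10000) (10367/10000) (by norm_num) (by linarith) (by linarith [hq1]) hq1 ha0 ha (by norm_num) (by norm_num)
      (my_rpow_cert 1 40 _ (by norm_num) (by norm_num) (by norm_num) (by norm_num) (by norm_num))
      (my_rpow_cert 1 20 _ (by norm_num) (by norm_num) (by norm_num) (by norm_num) (by norm_num))
      (by norm_num)

private lemma main2 (q τ : ℝ) (hq0 : 0 < q) (hq1 : q < 1) (ht : |τ| ≤ 1/2) :
    τ^(1+q)*q*(τ^2+(1/q)^2)^((1-q)/2) - τ^2*q + (1+1/q)^(1-q) - (1/q)*(1-q) - 1 ≤ 0 := by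
  have hz0 : (0:ℝ) < 1/q := by positivity
  by_cases hτ0 : τ = 0
  · subst hτ0
    rw [Real.zero_rpow (by positivity)]
    have hb := bern (x := 1/q) (w := 1-q) hz0.le (by linarith) (by linarith)
    simp only [zero_mul, ne_eq, OfNat.ofNat_ne_zero, not_false_eq_true, zero_pow, zero_sub,
      neg_mul, zero_add]
    nlinarith [hb]
  · set t : ℝ := |τ| with htdef
    have ht0 : 0 < t := abs_pos.mpr hτ0
    have ht2 : t ≤ 1/2 := ht
    have hstep : τ^(1+q) ≤ t^(1+q) := by
      calc τ^(1+q) ≤ |τ^(1+q)| := le_abs_self _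
        _ ≤ |τ|^(1+q) := Real.abs_rpow_le_abs_rpow τ (1+q)
    have hM : 0 ≤ q*(τ^2+(1/q)^2)^((1-q)/2) := by positivity
    have hτt : τ^2 = t^2 := (sq_abs τ).symm
    have hred : t^(1+q)*q*(t^2+(1/q)^2)^((1-q)/2) - t^2*q + (1+1/q)^(1-q) - (1/q)*(1-q) - 1 ≤ 0 := by
      have hcore := core q (q*t) hq0 hq1 (by positivity)
        (by nlinarith [mul_le_mul_of_nonneg_left ht2 hq0.le])
      have idB : (1+1/q : ℝ) = (1+q)/q := by field_simp; ring
      have e1 : ((q*t):ℝ)^(1+q) = q^(1+q)*t^(1+q) := Real.mul_rpow hq0.le ht0.le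
      have e2 : (1+(q*t)^2 : ℝ) = q^2*(t^2+(1/q)^2) := by field_simp; ring
      have e3 : ((q^2*(t^2+(1/q)^2)):ℝ)^((1-q)/2)
          = ((q^2:ℝ))^((1-q)/2) * ((t^2+(1/q)^2))^((1-q)/2) :=
        Real.mul_rpow (by positivity) (by positivity)
      have e4 : ((q^2:ℝ))^((1-q)/2) = q^(1-q) := by
        rw [← Real.rpow_natCast q 2, ← Real.rpow_mul hq0.le]
        congr 1
        push_cast
        ring
      have e5 : q^(1+q)*q^(1-q) = q^2 := by
        rw [← Real.rpow_add hq0, show ((1+q)+(1-q)) = ((2:ℕ):ℝ) by push_cast; ring,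
          Real.rpow_natCast]
      have idA : ((q*t):ℝ)^(1+q)*(1+(q*t)^2)^((1-q)/2)
          = q^2 * (t^(1+q)*(t^2+(1/q)^2)^((1-q)/2)) := by
        rw [e1, e2, e3, e4]
        linear_combination (t^(1+q)*((t^2+(1/q)^2)^((1-q)/2))) * e5
      have hk : q * (t^(1+q)*q*(t^2+(1/q)^2)^((1-q)/2) - t^2*q + (1+1/q)^(1-q) - (1/q)*(1-q) - 1) ≤ 0 := by
        have eq1 : q * (t^(1+q)*q*(t^2+(1/q)^2)^((1-q)/2) - t^2*q + (1+1/q)^(1-q) - (1/q)*(1-q) - 1)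
            = (q*t)^(1+q)*(1+(q*t)^2)^((1-q)/2) + q*((1+q)/q)^(1-q) - 1 - (q*t)^2 := by
          rw [idB, idA]
          field_simp
          ring
        rw [eq1]
        linarith [hcore]
      have := le_of_mul_le_mul_left (by simpa using hk : q * (t^(1+q)*q*(t^2+(1/q)^2)^((1-q)/2) - t^2*q + (1+1/q)^(1-q) - (1/q)*(1-q) - 1) ≤ q * 0) hq0
      simpa using this
    calc τ^(1+q)*q*(τ^2+(1/q)^2)^((1-q)/2) - τ^2*q + (1+1/q)^(1-q) - (1/q)*(1-q) - 1
        ≤ t^(1+q)*q*(τ^2+(1/q)^2)^((1-q)/2) - τ^2*q + (1+1/q)^(1-q) - (1/q)*(1-q) - 1 := by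
          have : τ^(1+q)*(q*(τ^2+(1/q)^2)^((1-q)/2)) ≤ t^(1+q)*(q*(τ^2+(1/q)^2)^((1-q)/2)) :=
            mul_le_mul_of_nonneg_right hstep hM
          linarith [this]
      _ ≤ 0 := by rw [hτt]; linarith [hred]

theorem stmt_12 (p τ : ℝ) (hp1 : 1 < p) (hp2 : p < 2) (hτ : |τ| ≤ 0.5)
    (u : ℝ → ℝ)
    (hu : u = fun z => τ ^ p * (p-1) * (τ^2 + z^2) ^ ((2-p)/2)
      - τ^2*(p-1) + (1+z) ^ (2-p) - z*(2-p) - 1) :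
    u (1/(p-1)) ≤ 0 := by
  subst hu
  simp only []
  have ht : |τ| ≤ 1/2 := by rw [show (0.5:ℝ) = 1/2 by norm_num] at hτ; exact hτ
  have h := main2 (p-1) τ (by linarith) (by linarith) ht
  rw [show (1+(p-1)) = p by ring, show (1-(p-1)) = 2-p by ring] at h
  linarith [h]
end

section
/- Let 1<p<2, τ>0, g(t)=(1-t)^p, f(t)=((1+t)²+τ²(1-t)²)^{p/2}, y_p=-1+2/p, and let s₀ ∈ (y_p, 1) satisfy the cup equation det[(1,1,-1-s₀);(g'(-1),g'(s₀),g(-1)-g(s₀));(f'(-1),f'(s₀),f(-1)-f(s₀))]=0 (rows as listed with a=-1, b=s₀). Then (f(s₀) − (s₀−y_p)f'(s₀))/(g(s₀) − (s₀−y_p)g'(s₀)) = (f'(-1) − f'(s₀))/(g'(-1) − g'(s₀)). -/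
theorem stmt_19 (p τ : ℝ) (hp1 : 1 < p) (hp2 : p < 2) (hτ : 0 < τ)
    (g f : ℝ → ℝ)
    (hg : g = fun t => (1-t) ^ p)
    (hf : f = fun t => ((1+t)^2 + τ^2*(1-t)^2) ^ (p/2))
    (s₀ : ℝ) (hs₀ : s₀ ∈ Set.Ioo (-1 + 2/p) 1)
    (hcup : Matrix.det !![(1 : ℝ), 1, -1 - s₀;
                          deriv g (-1), deriv g s₀, g (-1) - g s₀;
                          deriv f (-1), deriv f s₀, f (-1) - f s₀] = 0)
    (hden1 : g s₀ - (s₀ - (-1 + 2/p)) * deriv g s₀ ≠ 0)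
    (hden2 : deriv g (-1) ≠ deriv g s₀) :
    (f s₀ - (s₀ - (-1 + 2/p)) * deriv f s₀) / (g s₀ - (s₀ - (-1 + 2/p)) * deriv g s₀)
      = (deriv f (-1) - deriv f s₀) / (deriv g (-1) - deriv g s₀) := by
  have hp0 : p ≠ 0 := by positivity
  -- derivative of g at -1
  have hg1 : HasDerivAt g ((-1) * p * (2:ℝ) ^ (p-1)) (-1) := by
    have h1 : HasDerivAt (fun t : ℝ => 1 - t) (-1) (-1) := by
      simpa using (hasDerivAt_id' (-1:ℝ)).const_sub (1:ℝ)
    have := h1.rpow_const (p := p) (by norm_num)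
    rw [hg]
    convert this using 1
    norm_num
  have hgval : g (-1) = (2:ℝ) ^ p := by simp [hg]; norm_num
  have hg' : deriv g (-1) = (-1) * p * (2:ℝ) ^ (p-1) := hg1.deriv
  have hgrel : g (-1) = -(2/p) * deriv g (-1) := by
    rw [hgval, hg']
    have : (2:ℝ) ^ p = (2:ℝ) ^ (p-1) * 2 := by
      rw [← Real.rpow_add_one (by norm_num : (2:ℝ) ≠ 0)]; ring_nf
    rw [this]; field_simp
  -- derivative of f at -1
  have hu : HasDerivAt (fun t : ℝ => (1+t)^2 + τ^2*(1-t)^2) (-(4*τ^2)) (-1) := by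
    have h1 : HasDerivAt (fun t : ℝ => (1+t)^2) (2*(1+(-1))) (-1) := by
      have := ((hasDerivAt_id' (-1:ℝ)).const_add (1:ℝ)).fun_pow 2
      simpa using this
    have h2 : HasDerivAt (fun t : ℝ => τ^2*(1-t)^2) (τ^2 * (2*(1-(-1))*(-1))) (-1) := by
      have h3 : HasDerivAt (fun t : ℝ => 1 - t) (-1) (-1) := by
        simpa using (hasDerivAt_id' (-1:ℝ)).const_sub (1:ℝ)
      have := (h3.pow 2).const_mul (τ^2)
      simpa [mul_comm, mul_assoc] using this
    have := h1.fun_add h2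
    norm_num at this ⊢
    rw [show -(4 * τ ^ 2) = -(τ ^ 2 * 4) by ring]
    exact this
  have huval : ((1+(-1:ℝ))^2 + τ^2*(1-(-1))^2) = 4*τ^2 := by ring
  have hune : (4*τ^2 : ℝ) ≠ 0 := by positivity
  have hf1 : HasDerivAt f (-(4*τ^2) * (p/2) * (4*τ^2) ^ (p/2-1)) (-1) := by
    have := hu.rpow_const (p := p/2) (Or.inl (by rw [huval]; exact hune))
    rw [hf]
    convert this using 2
    rw [huval]
  have hfval : f (-1) = (4*τ^2 : ℝ) ^ (p/2) := by rw [hf]; simp only; rw [huval]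
  have hf' : deriv f (-1) = -(4*τ^2) * (p/2) * (4*τ^2) ^ (p/2-1) := hf1.deriv
  have hfrel : f (-1) = -(2/p) * deriv f (-1) := by
    rw [hfval, hf']
    have : (4*τ^2:ℝ) ^ (p/2) = (4*τ^2:ℝ) ^ (p/2-1) * (4*τ^2) := by
      rw [← Real.rpow_add_one hune]; ring_nf
    rw [this]; field_simp
  simp only [Matrix.det_fin_three, Matrix.cons_val', Matrix.cons_val_zero, Matrix.cons_val_one,
    Matrix.head_cons, Matrix.empty_val', Matrix.cons_val_fin_one, Matrix.head_fin_const,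
    Matrix.cons_val_two, Matrix.tail_cons, Matrix.of_apply] at hcup
  rw [hgrel, hfrel] at hcup
  rw [div_eq_div_iff hden1 (sub_ne_zero.mpr hden2)]
  have h2p : (2:ℝ)/p ≠ 0 := by positivity
  field_simp at hcup ⊢
  nlinarith [hcup, sq_nonneg p]
end
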